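/- Let D_1, ..., D_r be integral domains and R = D_1 × ⋯ × D_r. Then R is quasi-coherent if and only if for every finitely generated ideal I of R, the R-module Hom_R(I, R) is finitely generated. -/

import Mathlib

set_option linter.unusedSectionVars false
set_option linter.unusedVariables false
set_option maxHeartbeats 1000000

section Helpers
variable {ι : Type*} {D : ι → Type*} [∀ i, CommRing (D i)] [∀ i, IsDomain (D i)]

open Classical in
/-- the idempotent indicator of the zero set of `a`. -/
noncomputable def qcEps (a : ∀ i, D i) : ∀ i, D i := fun i =>
  if a i = 0 then 1 else 0

open Classical in
lemma qcEps_apply (a : ∀ i, D i) (i : ι) :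
    qcEps a i = if a i = 0 then 1 else 0 := rfl

lemma qcEps_mul (a : ∀ i, D i) : a * qcEps a = 0 := by
  funext i
  simp only [Pi.mul_apply, qcEps_apply, Pi.zero_apply]
  split <;> simp_all

lemma qcEps_idem (a : ∀ i, D i) : qcEps a * qcEps a = qcEps a := by
  funext i
  simp only [Pi.mul_apply, qcEps_apply]
  split <;> simp

lemma qcPiDvd {a x : ∀ i, D i} : a ∣ x ↔ ∀ i, a i ∣ x i := by
  constructor
  · rintro ⟨c, rfl⟩ i; exact ⟨c i, rfl⟩
  · intro h; exact ⟨fun i => (h i).choose, funext fun i => (h i).choose_spec⟩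

lemma mem_span_singleton_pi {a x : ∀ i, D i} :
    x ∈ Ideal.span {a} ↔ ∀ i, a i ∣ x i :=
  Ideal.mem_span_singleton.trans qcPiDvd

/-- regular elements = componentwise nonzero -/
def qcReg (a : ∀ i, D i) : Prop := ∀ i, a i ≠ 0

lemma qcReg.cancel {a x y : ∀ i, D i} (ha : qcReg a) (h : a * x = a * y) : x = y := by
  funext i
  exact mul_left_cancel₀ (ha i) (congrFun h i)

lemma qcReg.mul {a b : ∀ i, D i} (ha : qcReg a) (hb : qcReg b) : qcReg (a * b) :=
  fun i => mul_ne_zero (ha i) (hb i)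

lemma qcReg_one : qcReg (1 : ∀ i, D i) := fun i => one_ne_zero

lemma qcReg_add_eps (a : ∀ i, D i) : qcReg (a + qcEps a) := by
  intro i
  simp only [Pi.add_apply, qcEps_apply]
  split <;> simp_all

lemma qcReg_prod {α : Type*} {s : Finset α} (f : α → (∀ i, D i))
    (hf : ∀ b ∈ s, qcReg (f b)) : qcReg (∏ b ∈ s, f b) :=
  Finset.prod_induction f qcReg (fun _ _ => qcReg.mul) qcReg_one hf

lemma mem_colon_span {N : Ideal (∀ i, D i)} {S : Set (∀ i, D i)} {x : ∀ i, D i} :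
    x ∈ Submodule.colon N (Ideal.span S) ↔ ∀ b ∈ S, x * b ∈ N := by
  rw [Submodule.mem_colon]
  constructor
  · intro h b hb; simpa [smul_eq_mul] using h b (Ideal.subset_span hb)
  · intro h p hp
    induction hp using Submodule.span_induction with
    | mem y hy => simpa [smul_eq_mul] using h y hy
    | zero => simp
    | add y z _ _ hy hz => rw [smul_add]; exact N.add_mem hy hz
    | smul r y _ hy => rw [smul_comm]; exact N.smul_mem r hy

/-- The key isomorphism: if `a ∈ I = span s` has support equal to the support of `I`,
then `Hom(I, R) ≃ (aR : I + (qcEps a)R)`. -/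
lemma hom_equiv_colon (s : Finset (∀ i, D i)) (a : ∀ i, D i)
    (ha : a ∈ Ideal.span (s : Set (∀ i, D i)))
    (hsupp : ∀ b ∈ s, ∀ i, a i = 0 → b i = 0) :
    Nonempty ((Ideal.span (s : Set (∀ i, D i)) →ₗ[∀ i, D i] (∀ i, D i)) ≃ₗ[∀ i, D i]
      (Submodule.colon (Ideal.span {a})
        (Ideal.span (insert (qcEps a) (s : Set (∀ i, D i)))) : Ideal (∀ i, D i))) := by
  classical
  set f : ∀ i, D i := qcEps a with hf
  set I : Ideal (∀ i, D i) := Ideal.span (s : Set (∀ i, D i)) with hI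
  set C : Ideal (∀ i, D i) :=
    Submodule.colon (Ideal.span {a}) (Ideal.span (insert f (s : Set (∀ i, D i)))) with hC
  have hfa : f * a = 0 := by rw [mul_comm]; exact qcEps_mul a
  have hfa2 : a * f = 0 := qcEps_mul a
  have hff : f * f = f := qcEps_idem a
  have hfb : ∀ b ∈ (s : Set (∀ i, D i)), f * b = 0 := by
    intro b hb
    funext i
    simp only [Pi.mul_apply, Pi.zero_apply]
    rw [hf, qcEps_apply]
    split
    · rename_i h0; rw [hsupp b hb i h0, mul_zero]
    · rw [zero_mul]
  have hfI : ∀ y ∈ I, f * y = 0 := by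
    intro y hy
    induction hy using Submodule.span_induction with
    | mem b hb => exact hfb b hb
    | zero => rw [mul_zero]
    | add y z _ _ hy hz => rw [mul_add, hy, hz, add_zero]
    | smul r y _ hy => rw [smul_eq_mul, mul_left_comm, hy, mul_zero]
  have acancel : ∀ u v : ∀ i, D i, a * u = a * v → (1 - f) * u = (1 - f) * v := by
    intro u v h
    funext i
    simp only [Pi.mul_apply, Pi.sub_apply, Pi.one_apply]
    rw [hf, qcEps_apply]
    by_cases h0 : a i = 0
    · rw [if_pos h0]; simp
    · rw [if_neg h0]; simp only [sub_zero, one_mul]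
      exact mul_left_cancel₀ h0 (congrFun h i)
  have hsub : ∀ y : I, ((1 - f) • y : I) = y := by
    rintro ⟨y, hy⟩
    apply Subtype.ext
    show (1 - f) * y = y
    rw [sub_mul, one_mul, hfI y hy, sub_zero]
  have hmem : ∀ φ : I →ₗ[∀ i, D i] (∀ i, D i), φ ⟨a, ha⟩ ∈ C := by
    intro φ
    have hφa : (1 - f) * φ ⟨a, ha⟩ = φ ⟨a, ha⟩ := by
      conv_rhs => rw [show (⟨a, ha⟩ : I) = (1 - f) • ⟨a, ha⟩ from (hsub _).symm]
      rw [map_smul, smul_eq_mul]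
    rw [hC, mem_colon_span]
    rintro b (hbf | hb)
    · subst hbf
      have : φ ⟨a, ha⟩ * f = 0 := by
        rw [← hφa, mul_assoc, mul_comm (φ _), ← mul_assoc, sub_mul, one_mul, hff, sub_self,
          zero_mul]
      rw [this]; exact Ideal.zero_mem _
    · have key : (b • (⟨a, ha⟩ : I)) = a • ⟨b, Ideal.subset_span hb⟩ := by
        apply Subtype.ext
        show b * a = a * b
        exact mul_comm b a
      have : φ ⟨a, ha⟩ * b = a * φ ⟨b, Ideal.subset_span hb⟩ := by
        calc φ ⟨a, ha⟩ * b = b • φ ⟨a, ha⟩ := by rw [smul_eq_mul, mul_comm]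
          _ = φ (b • ⟨a, ha⟩) := (map_smul φ b _).symm
          _ = φ (a • ⟨b, Ideal.subset_span hb⟩) := by rw [key]
          _ = a * φ ⟨b, Ideal.subset_span hb⟩ := by rw [map_smul, smul_eq_mul]
      rw [this]
      exact Ideal.mem_span_singleton.mpr (dvd_mul_right _ _)
  let Φ : (I →ₗ[∀ i, D i] (∀ i, D i)) →ₗ[∀ i, D i] C :=
    { toFun := fun φ => ⟨φ ⟨a, ha⟩, hmem φ⟩
      map_add' := fun φ ψ => rfl
      map_smul' := fun r φ => rfl }
  have hinj : Function.Injective Φ := by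
    rw [← LinearMap.ker_eq_bot, LinearMap.ker_eq_bot']
    intro φ hφ
    have hφa : φ ⟨a, ha⟩ = 0 := congrArg Subtype.val hφ
    ext y
    have key : (a • y : I) = (y : ∀ i, D i) • ⟨a, ha⟩ := by
      apply Subtype.ext
      show a * (y : ∀ i, D i) = (y : ∀ i, D i) * a
      exact mul_comm _ _
    have h1 : a * φ y = 0 := by
      calc a * φ y = a • φ y := rfl
        _ = φ (a • y) := (map_smul φ a y).symm
        _ = φ ((y : ∀ i, D i) • ⟨a, ha⟩) := by rw [key]
        _ = (y : ∀ i, D i) • φ ⟨a, ha⟩ := map_smul φ _ _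
        _ = 0 := by rw [hφa, smul_zero]
    have h2 : φ y = (1 - f) * φ y := by
      conv_lhs => rw [← hsub y, map_smul, smul_eq_mul]
    have h3 := acancel (φ y) 0 (by rw [h1, mul_zero])
    rw [h2, h3, mul_zero]
    rfl
  have hsurj : Function.Surjective Φ := by
    rintro ⟨x, hx⟩
    have hx' : ∀ b ∈ insert f (s : Set (∀ i, D i)), x * b ∈ Ideal.span {a} := by
      rw [hC] at hx; exact mem_colon_span.mp hx
    have hxf : x * f = 0 := by
      obtain ⟨d, hd⟩ := Ideal.mem_span_singleton.mp (hx' f (Set.mem_insert _ _))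
      have h4 : x * f * f = a * d * f := by rw [hd]
      rw [mul_assoc, hff] at h4
      rw [h4, mul_right_comm, hfa2, zero_mul]
    have hxI : ∀ y : I, a ∣ x * (y : ∀ i, D i) := by
      rintro ⟨y, hy⟩
      have hy' : y ∈ Ideal.span (insert f (s : Set (∀ i, D i))) :=
        Ideal.span_mono (Set.subset_insert _ _) hy
      rw [hC] at hx
      have h5 := Submodule.mem_colon.mp hx y hy'
      rw [smul_eq_mul] at h5
      exact Ideal.mem_span_singleton.mp h5
    choose z hz using hxI
    have wadd : ∀ y y' : I, (1 - f) * z (y + y') = (1 - f) * z y + (1 - f) * z y' := by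
      intro y y'
      rw [← mul_add]
      apply acancel
      calc a * z (y + y') = x * ((y + y' : I) : ∀ i, D i) := (hz _).symm
        _ = x * (y : ∀ i, D i) + x * (y' : ∀ i, D i) := by rw [Submodule.coe_add, mul_add]
        _ = a * z y + a * z y' := by rw [hz, hz]
        _ = a * (z y + z y') := (mul_add _ _ _).symm
    have wsmul : ∀ (r : ∀ i, D i) (y : I),
        (1 - f) * z (r • y) = r * ((1 - f) * z y) := by
      intro r y
      rw [mul_left_comm]
      apply acancel
      calc a * z (r • y) = x * ((r • y : I) : ∀ i, D i) := (hz _).symm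
        _ = r * (x * (y : ∀ i, D i)) := by rw [Submodule.coe_smul, smul_eq_mul]; ring
        _ = a * (r * z y) := by rw [hz]; ring
    let φ : I →ₗ[∀ i, D i] (∀ i, D i) :=
      { toFun := fun y => (1 - f) * z y
        map_add' := wadd
        map_smul' := fun r y => by simpa [smul_eq_mul] using wsmul r y }
    refine ⟨φ, ?_⟩
    apply Subtype.ext
    show (1 - f) * z ⟨a, ha⟩ = x
    have h1 : a * z ⟨a, ha⟩ = a * x := by rw [← hz]; exact mul_comm x a
    rw [acancel _ _ h1, sub_mul, one_mul, mul_comm f x, hxf, sub_zero]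
  exact ⟨LinearEquiv.ofBijective Φ ⟨hinj, hsurj⟩⟩

lemma hom_finite_iff_colon_fg (s : Finset (∀ i, D i)) (a : ∀ i, D i)
    (ha : a ∈ Ideal.span (s : Set (∀ i, D i)))
    (hsupp : ∀ b ∈ s, ∀ i, a i = 0 → b i = 0) :
    Module.Finite (∀ i, D i) (Ideal.span (s : Set (∀ i, D i)) →ₗ[∀ i, D i] (∀ i, D i)) ↔
      (Submodule.colon (Ideal.span {a})
        (Ideal.span (insert (qcEps a) (s : Set (∀ i, D i)))) : Ideal (∀ i, D i)).FG := by
  obtain ⟨e⟩ := hom_equiv_colon s a ha hsupp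
  constructor
  · intro h
    haveI := h
    exact Module.Finite.iff_fg.mp (Module.Finite.equiv e)
  · intro h
    haveI := Module.Finite.iff_fg.mpr h
    exact Module.Finite.equiv e.symm

/-- Direction 1, step B: intersections of principal ideals with regular generators. -/
lemma inf_span_fg_of_hom
    (hyp : ∀ I : Ideal (∀ i, D i), I.FG →
      Module.Finite (∀ i, D i) (I →ₗ[∀ i, D i] (∀ i, D i)))
    (s : Finset (∀ i, D i)) (hs : ∀ b ∈ s, qcReg b) :
    (s.inf fun b => (Ideal.span {b} : Ideal (∀ i, D i))).FG := by
  classical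
  rcases s.eq_empty_or_nonempty with rfl | ⟨b₀, hb₀⟩
  · refine ⟨{1}, ?_⟩
    simp [Ideal.span_singleton_one]
  set c : (∀ i, D i) → (∀ i, D i) := fun b => ∏ k ∈ s.erase b, k with hc
  have hreg : ∀ b ∈ s, qcReg (c b) := fun b hb =>
    qcReg_prod _ (fun k hk => hs k (Finset.mem_of_mem_erase hk))
  have hcreg : qcReg (c b₀) := hreg b₀ hb₀
  have hP : ∀ b ∈ s, b * c b = ∏ k ∈ s, k := fun b hb =>
    Finset.mul_prod_erase s (fun k => k) hb
  have haJ : c b₀ ∈ Ideal.span ((s.image c : Finset (∀ i, D i)) : Set (∀ i, D i)) :=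
    Ideal.subset_span (Finset.mem_coe.mpr (Finset.mem_image_of_mem c hb₀))
  have heps : qcEps (c b₀) = 0 := funext fun i => by
    rw [qcEps_apply, if_neg (hcreg i)]; simp
  have hcolon := (hom_finite_iff_colon_fg (s.image c) (c b₀) haJ
    (fun b hb i h0 => absurd h0 (hcreg i))).mp (hyp _ ⟨s.image c, rfl⟩)
  rw [heps] at hcolon
  rw [show Ideal.span (insert (0 : ∀ i, D i) ((s.image c : Finset (∀ i, D i)) : Set (∀ i, D i)))
      = Ideal.span ((s.image c : Finset (∀ i, D i)) : Set (∀ i, D i))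
    from Submodule.span_insert_zero] at hcolon
  have key : (s.inf fun b => (Ideal.span {b} : Ideal (∀ i, D i))) =
      Submodule.map (LinearMap.lsmul (∀ i, D i) (∀ i, D i) b₀)
        (Submodule.colon (Ideal.span {c b₀})
          (Ideal.span ((s.image c : Finset (∀ i, D i)) : Set (∀ i, D i)))) := by
    ext x
    rw [Submodule.mem_finsetInf, Submodule.mem_map]
    constructor
    · intro hx
      obtain ⟨zc, hzc⟩ := Ideal.mem_span_singleton.mp (hx b₀ hb₀)
      refine ⟨zc, ?_, by rw [LinearMap.lsmul_apply, smul_eq_mul]; exact hzc.symm⟩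
      rw [mem_colon_span]
      intro b' hb'
      obtain ⟨b, hb, rfl⟩ := Finset.mem_image.mp (Finset.mem_coe.mp hb')
      obtain ⟨w, hw⟩ := Ideal.mem_span_singleton.mp (hx b hb)
      rw [Ideal.mem_span_singleton]
      refine ⟨w, ?_⟩
      apply (hs b₀ hb₀).cancel
      calc b₀ * (zc * c b) = x * c b := by rw [hzc]; ring
        _ = (b * c b) * w := by rw [hw]; ring
        _ = (b₀ * c b₀) * w := by rw [hP b hb, hP b₀ hb₀]
        _ = b₀ * (c b₀ * w) := by ring
    · rintro ⟨z, hz, rfl⟩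
      intro b hb
      have hcb : c b ∈ Ideal.span ((s.image c : Finset (∀ i, D i)) : Set (∀ i, D i)) :=
        Ideal.subset_span (Finset.mem_coe.mpr (Finset.mem_image_of_mem c hb))
      have h5 := Submodule.mem_colon.mp hz (c b) hcb
      rw [smul_eq_mul] at h5
      obtain ⟨d, hd⟩ := Ideal.mem_span_singleton.mp h5
      rw [LinearMap.lsmul_apply, smul_eq_mul, Ideal.mem_span_singleton]
      refine ⟨d, ?_⟩
      apply (hreg b hb).cancel
      calc c b * (b₀ * z) = b₀ * (z * c b) := by ring
        _ = b₀ * (c b₀ * d) := by rw [hd]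
        _ = (b₀ * c b₀) * d := by ring
        _ = (b * c b) * d := by rw [hP b hb, hP b₀ hb₀]
        _ = c b * (b * d) := by ring
  rw [key]
  exact Submodule.FG.map _ hcolon

/-- Direction 1, step A: arbitrary finite intersections of principal ideals. -/
lemma inf_span_fg_all
    (hyp : ∀ I : Ideal (∀ i, D i), I.FG →
      Module.Finite (∀ i, D i) (I →ₗ[∀ i, D i] (∀ i, D i)))
    (s : Finset (∀ i, D i)) :
    (s.inf fun b => (Ideal.span {b} : Ideal (∀ i, D i))).FG := by
  classical
  have h' := inf_span_fg_of_hom hyp (s.image fun b => b + qcEps b) (by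
    intro b' hb'
    obtain ⟨b, hb, rfl⟩ := Finset.mem_image.mp hb'
    exact qcReg_add_eps b)
  set F : ∀ i, D i := ∏ b ∈ s, (1 - qcEps b) with hF
  have hF1 : ∀ i, (∀ b ∈ s, b i ≠ 0) → F i = 1 := by
    intro i hi
    rw [hF, Finset.prod_apply]
    refine Finset.prod_eq_one (fun b hb => ?_)
    simp only [Pi.sub_apply, Pi.one_apply, qcEps_apply, if_neg (hi b hb), sub_zero]
  have hF0 : ∀ i, ∀ b ∈ s, b i = 0 → F i = 0 := by
    intro i b hb h0
    rw [hF, Finset.prod_apply]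
    refine Finset.prod_eq_zero hb ?_
    simp only [Pi.sub_apply, Pi.one_apply, qcEps_apply, if_pos h0, sub_self]
  have key : (s.inf fun b => (Ideal.span {b} : Ideal (∀ i, D i))) =
      Submodule.map (LinearMap.lsmul (∀ i, D i) (∀ i, D i) F)
        ((s.image fun b => b + qcEps b).inf fun b => (Ideal.span {b} : Ideal (∀ i, D i))) := by
    ext x
    rw [Submodule.mem_finsetInf, Submodule.mem_map]
    constructor
    · intro hx
      refine ⟨x, ?_, ?_⟩
      · rw [Submodule.mem_finsetInf]
        intro b' hb'
        obtain ⟨b, hb, rfl⟩ := Finset.mem_image.mp hb'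
        rw [mem_span_singleton_pi]
        intro i
        by_cases h0 : b i = 0
        · have : x i = 0 := by
            have := mem_span_singleton_pi.mp (hx b hb) i
            rwa [h0, zero_dvd_iff] at this
          rw [this]
          exact dvd_zero _
        · have hbi := mem_span_singleton_pi.mp (hx b hb) i
          simpa [Pi.add_apply, qcEps_apply, if_neg h0] using hbi
      · rw [LinearMap.lsmul_apply, smul_eq_mul]
        funext i
        rw [Pi.mul_apply]
        by_cases hall : ∀ b ∈ s, b i ≠ 0
        · rw [hF1 i hall, one_mul]
        · push_neg at hall
          obtain ⟨b, hb, h0⟩ := hall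
          have : x i = 0 := by
            have := mem_span_singleton_pi.mp (hx b hb) i
            rwa [h0, zero_dvd_iff] at this
          rw [this, mul_zero]
    · rintro ⟨y, hy, rfl⟩
      rw [Submodule.mem_finsetInf] at hy
      intro b hb
      rw [LinearMap.lsmul_apply, smul_eq_mul, mem_span_singleton_pi]
      intro i
      rw [Pi.mul_apply]
      by_cases h0 : b i = 0
      · rw [h0, hF0 i b hb h0, zero_mul]
      · have h6 : (b + qcEps b) i ∣ y i := mem_span_singleton_pi.mp
          (hy _ (Finset.mem_image_of_mem (fun b => b + qcEps b) hb)) i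
        rw [Pi.add_apply, qcEps_apply, if_neg h0, add_zero] at h6
        exact h6.mul_left _
  rw [key]
  exact Submodule.FG.map _ h'

/-- Direction 1, annihilators. -/
lemma colon_bot_eq (a : ∀ i, D i) :
    (Submodule.colon (⊥ : Ideal (∀ i, D i)) (Ideal.span {a})) = Ideal.span {qcEps a} := by
  ext x
  rw [mem_colon_span, mem_span_singleton_pi]
  constructor
  · intro h i
    have h0 := h a rfl
    rw [Submodule.mem_bot] at h0
    rw [qcEps_apply]
    by_cases hai : a i = 0
    · rw [if_pos hai]; exact one_dvd _
    · rw [if_neg hai, zero_dvd_iff]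
      have := congrFun h0 i
      rw [Pi.mul_apply, Pi.zero_apply] at this
      exact (mul_eq_zero.mp this).resolve_right hai
  · intro h b hb
    rw [Set.mem_singleton_iff] at hb
    rw [hb, Submodule.mem_bot]
    funext i
    rw [Pi.mul_apply, Pi.zero_apply]
    by_cases hai : a i = 0
    · rw [hai, mul_zero]
    · have := h i
      rw [qcEps_apply, if_neg hai, zero_dvd_iff] at this
      rw [this, zero_mul]

/-- an element of `span s` whose support is the union of the supports. -/
noncomputable def qcCombo : List (∀ i, D i) → (∀ i, D i)
  | [] => 0
  | b :: t => b + qcEps b * qcCombo t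

lemma qcCombo_mem {X : Set (∀ i, D i)} :
    ∀ l : List (∀ i, D i), (∀ b ∈ l, b ∈ X) → qcCombo l ∈ Ideal.span X
  | [] => fun _ => by rw [qcCombo]; exact Ideal.zero_mem _
  | b :: t => fun h => by
    rw [qcCombo]
    exact Ideal.add_mem _ (Ideal.subset_span (h b List.mem_cons_self))
      (Ideal.mul_mem_left _ _ (qcCombo_mem t fun c hc => h c (List.mem_cons_of_mem b hc)))

lemma qcCombo_zero_iff :
    ∀ (l : List (∀ i, D i)) (i : ι), qcCombo l i = 0 ↔ ∀ b ∈ l, b i = 0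
  | [], i => by simp [qcCombo]
  | b :: t, i => by
    rw [qcCombo]
    simp only [Pi.add_apply, Pi.mul_apply, qcEps_apply, List.mem_cons]
    by_cases h0 : b i = 0
    · rw [if_pos h0, h0, one_mul, zero_add]
      rw [qcCombo_zero_iff t i]
      constructor
      · intro h c hc
        rcases hc with rfl | hc
        · exact h0
        · exact h c hc
      · intro h c hc
        exact h c (Or.inr hc)
    · rw [if_neg h0, zero_mul, add_zero]
      constructor
      · intro h; exact absurd h h0
      · intro h; exact absurd (h b (Or.inl rfl)) h0

/-- Direction 2: the colon ideal is finitely generated, given quasi-coherence. -/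
lemma colon_fg_of_qc
    (h2 : ∀ u : Finset (∀ i, D i), (u.inf fun b => (Ideal.span {b} : Ideal (∀ i, D i))).FG)
    (s : Finset (∀ i, D i)) (a : ∀ i, D i)
    (ha : a ∈ Ideal.span (s : Set (∀ i, D i)))
    (hsupp : ∀ b ∈ s, ∀ i, a i = 0 → b i = 0) :
    (Submodule.colon (Ideal.span {a})
      (Ideal.span (insert (qcEps a) (s : Set (∀ i, D i)))) : Ideal (∀ i, D i)).FG := by
  classical
  set f : ∀ i, D i := qcEps a with hf
  have hareg : qcReg (a + f) := qcReg_add_eps a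
  set G : ∀ i, D i := ∏ b ∈ s, (b + qcEps b) with hG
  have hGreg : qcReg G := qcReg_prod _ (fun b _ => qcReg_add_eps b)
  have hGinj : Function.Injective (LinearMap.lsmul (∀ i, D i) (∀ i, D i) G) := by
    intro u v h
    rw [LinearMap.lsmul_apply, LinearMap.lsmul_apply, smul_eq_mul, smul_eq_mul] at h
    exact hGreg.cancel h
  set hh : (∀ i, D i) → (∀ i, D i) := fun g =>
    qcEps g + (a + f) * (∏ k ∈ s.erase g, (k + qcEps k)) * (1 - qcEps g) with hhh
  set u : Finset (∀ i, D i) := insert G (insert (1 - f) (s.image hh)) with hu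
  -- the product over `s.erase g` is regular
  have hPgreg : ∀ g, qcReg (∏ k ∈ s.erase g, (k + qcEps k)) :=
    fun g => qcReg_prod _ (fun b _ => qcReg_add_eps b)
  -- G = (g + qcEps g) * ∏ over erase, for g ∈ s
  have hGsplit : ∀ g ∈ s, G = (g + qcEps g) * ∏ k ∈ s.erase g, (k + qcEps k) :=
    fun g hg => (Finset.mul_prod_erase s (fun k => k + qcEps k) hg).symm
  have key : Submodule.map (LinearMap.lsmul (∀ i, D i) (∀ i, D i) G)
      (Submodule.colon (Ideal.span {a}) (Ideal.span (insert f (s : Set (∀ i, D i)))))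
      = u.inf fun b => (Ideal.span {b} : Ideal (∀ i, D i)) := by
    ext y
    rw [Submodule.mem_map, Submodule.mem_finsetInf]
    constructor
    · rintro ⟨x, hx, rfl⟩
      rw [mem_colon_span] at hx
      have hxf : x * f = 0 := by
        obtain ⟨d, hd⟩ := Ideal.mem_span_singleton.mp (hx f (Set.mem_insert _ _))
        have h4 : x * f * f = a * d * f := by rw [hd]
        rw [mul_assoc, qcEps_idem a] at h4
        rw [h4, mul_right_comm, qcEps_mul a, zero_mul]
      intro b hb
      rw [LinearMap.lsmul_apply, smul_eq_mul]
      rw [hu] at hb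
      rcases Finset.mem_insert.mp hb with rfl | hb
      · exact Ideal.mem_span_singleton.mpr (dvd_mul_right _ _)
      rcases Finset.mem_insert.mp hb with rfl | hb
      · -- b = 1 - f
        rw [mem_span_singleton_pi]
        intro i
        rw [Pi.sub_apply, Pi.one_apply, hf, qcEps_apply]
        by_cases hai : a i = 0
        · rw [if_pos hai, sub_self, zero_dvd_iff, Pi.mul_apply]
          have hxi : x i * (if a i = 0 then (1 : D i) else 0) = 0 := by
            have := congrFun hxf i
            rwa [Pi.mul_apply, Pi.zero_apply, hf, qcEps_apply] at this
          rw [if_pos hai, mul_one] at hxi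
          rw [hxi, mul_zero]
        · rw [if_neg hai, sub_zero]
          exact one_dvd _
      · -- b = hh g for some g ∈ s
        obtain ⟨g, hg, rfl⟩ := Finset.mem_image.mp hb
        obtain ⟨r, hr⟩ := Ideal.mem_span_singleton.mp
          (hx g (Set.mem_insert_of_mem _ (Finset.mem_coe.mpr hg)))
        rw [mem_span_singleton_pi]
        intro i
        rw [hhh]
        simp only [Pi.add_apply, Pi.mul_apply, Pi.sub_apply, Pi.one_apply, hf, qcEps_apply]
        by_cases hgi : g i = 0
        · rw [if_pos hgi, sub_self, mul_zero, add_zero]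
          exact one_dvd _
        · have hai : a i ≠ 0 := fun h0 => hgi (hsupp g hg i h0)
          rw [if_neg hgi, if_neg hai, sub_zero, mul_one, zero_add, add_zero]
          refine ⟨r i, ?_⟩
          have hGi : G i = g i * (∏ k ∈ s.erase g, (k + qcEps k)) i := by
            rw [hGsplit g hg, Pi.mul_apply, Pi.add_apply, qcEps_apply, if_neg hgi, add_zero]
          rw [hGi]
          have hxgi : x i * g i = a i * r i := by
            have := congrFun hr i
            rwa [Pi.mul_apply, Pi.mul_apply] at this
          calc g i * (∏ k ∈ s.erase g, (k + qcEps k)) i * x i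
              = (∏ k ∈ s.erase g, (k + qcEps k)) i * (x i * g i) := by ring
            _ = (∏ k ∈ s.erase g, (k + qcEps k)) i * (a i * r i) := by rw [hxgi]
            _ = a i * (∏ k ∈ s.erase g, (k + qcEps k)) i * r i := by ring
    · intro hy
      have hyG := hy G (by rw [hu]; exact Finset.mem_insert_self _ _)
      obtain ⟨x, hx⟩ := Ideal.mem_span_singleton.mp hyG
      refine ⟨x, ?_, by rw [LinearMap.lsmul_apply, smul_eq_mul]; exact hx.symm⟩
      rw [mem_colon_span]
      have hy1f := hy (1 - f) (by
        rw [hu]; exact Finset.mem_insert_of_mem (Finset.mem_insert_self _ _))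
      intro b hb
      rcases hb with rfl | hb
      · -- b = f : show x * f ∈ span {a}; in fact x * f = 0
        have : x * f = 0 := by
          obtain ⟨w, hw⟩ := Ideal.mem_span_singleton.mp hy1f
          funext i
          rw [Pi.mul_apply, Pi.zero_apply, hf, qcEps_apply]
          by_cases hai : a i = 0
          · have hyi : y i = 0 := by
              have := congrFun hw i
              rw [Pi.mul_apply, Pi.sub_apply, Pi.one_apply, hf, qcEps_apply,
                if_pos hai, sub_self, zero_mul] at this
              exact this
            have hGx : G i * x i = 0 := by
              have := congrFun hx i
              rw [Pi.mul_apply] at this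
              rw [← this, hyi]
            have hxi : x i = 0 := by
              rcases mul_eq_zero.mp hGx with h | h
              · exact absurd h (hGreg i)
              · exact h
            rw [hxi, zero_mul]
          · rw [if_neg hai, mul_zero]
        rw [this]
        exact Ideal.zero_mem _
      · -- b ∈ s
        have hyb := hy (hh b) (by
          rw [hu]
          exact Finset.mem_insert_of_mem (Finset.mem_insert_of_mem
            (Finset.mem_image_of_mem hh (Finset.mem_coe.mp hb))))
        obtain ⟨w, hw⟩ := Ideal.mem_span_singleton.mp hyb
        rw [mem_span_singleton_pi]
        intro i
        by_cases hai : a i = 0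
        · rw [Pi.mul_apply, hsupp b (Finset.mem_coe.mp hb) i hai, mul_zero]
          exact dvd_zero _
        by_cases hbi : b i = 0
        · rw [Pi.mul_apply, hbi, mul_zero]
          exact dvd_zero _
        · refine ⟨w i, ?_⟩
          -- cancel (∏ k ∈ s.erase b, (k + qcEps k)) i
          apply mul_left_cancel₀ (hPgreg b i)
          have hGi : G i = b i * (∏ k ∈ s.erase b, (k + qcEps k)) i := by
            rw [hGsplit b (Finset.mem_coe.mp hb), Pi.mul_apply, Pi.add_apply,
              qcEps_apply, if_neg hbi, add_zero]
          have hyi : y i = G i * x i := by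
            have := congrFun hx i
            rw [Pi.mul_apply] at this
            exact this
          have hwi : y i = (hh b) i * w i := by
            have := congrFun hw i
            rw [Pi.mul_apply] at this
            exact this
          have hhbi : (hh b) i = a i * (∏ k ∈ s.erase b, (k + qcEps k)) i := by
            rw [hhh]
            simp only [Pi.add_apply, Pi.mul_apply, Pi.sub_apply, Pi.one_apply, hf, qcEps_apply]
            rw [if_neg hbi, if_neg hai, sub_zero, mul_one, zero_add, add_zero]
          calc (∏ k ∈ s.erase b, (k + qcEps k)) i * (x * b) i
              = G i * x i := by rw [Pi.mul_apply, hGi]; ring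
            _ = (hh b) i * w i := by rw [← hyi, hwi]
            _ = (∏ k ∈ s.erase b, (k + qcEps k)) i * (a i * w i) := by rw [hhbi]; ring
  have hW := h2 u
  rw [← key] at hW
  exact Submodule.fg_of_fg_map_injective _ hGinj hW

end Helpers

/-- A quasi-coherent ring: every annihilator ideal `(0 :_R a)` is finitely
generated, and every intersection of finitely many principal ideals is finitely
generated. -/
def IsQuasiCoherentRing (R : Type*) [CommRing R] : Prop :=
  (∀ a : R, (Submodule.colon (⊥ : Ideal R) (Ideal.span {a})).FG) ∧
    ∀ s : Finset R, (s.inf fun a => (Ideal.span {a} : Ideal R)).FG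

/-- a finite product `R = D₁ × ⋯ × Dᵣ` of integral domains is
quasi-coherent iff `Hom_R(I, R)` is finitely generated for every finitely
generated ideal `I` of `R`. -/
theorem stmt_18 (ι : Type*) [Fintype ι] (D : ι → Type*)
    [∀ i, CommRing (D i)] [∀ i, IsDomain (D i)] :
    IsQuasiCoherentRing (∀ i, D i) ↔
      ∀ I : Ideal (∀ i, D i), I.FG →
        Module.Finite (∀ i, D i) (I →ₗ[∀ i, D i] (∀ i, D i)) := by
  classical
  constructor
  · rintro ⟨h1, h2⟩ I hI
    obtain ⟨s, rfl⟩ := hI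
    have ha : qcCombo s.toList ∈ Ideal.span (s : Set (∀ i, D i)) :=
      qcCombo_mem s.toList (fun b hb => Finset.mem_coe.mpr (Finset.mem_toList.mp hb))
    have hsupp : ∀ b ∈ s, ∀ i, qcCombo s.toList i = 0 → b i = 0 := fun b hb i h0 =>
      (qcCombo_zero_iff s.toList i).mp h0 b (Finset.mem_toList.mpr hb)
    rw [hom_finite_iff_colon_fg s (qcCombo s.toList) ha hsupp]
    exact colon_fg_of_qc h2 s _ ha hsupp
  · intro hyp
    constructor
    · intro a
      rw [colon_bot_eq]
      exact ⟨{qcEps a}, by simp⟩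
    · exact inf_span_fg_all hyp
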